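/- Let q ≥ 2 be an integer and let a ∈ ẑ (the profinite completion of ℤ) be such that q^a = 1 in ∏_{l prime, l ∤ q} ℤ_lˣ (i.e., for every prime l not dividing q, the image of a in ℤ_l acts trivially by exponentiation on ℤ_l(1)). Then a = 0. -/

import Mathlib

open Polynomial

theorem stmt6 (q : ℕ) (hq : 2 ≤ q)
    (a : ∀ n : ℕ, ZMod n)
    (ha : ∀ m n : ℕ, 0 < m → ∀ h : m ∣ n, ZMod.castHom h (ZMod m) (a n) = a m)
    (H : ∀ l : ℕ, l.Prime → ¬ l ∣ q → ∀ k : ℕ, 0 < k → ∀ b : ℕ,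
      (b : ZMod ((l ^ k).totient)) = a ((l ^ k).totient) → q ^ b ≡ 1 [MOD l ^ k]) :
    ∀ n : ℕ, 0 < n → a n = 0 := by
  have hq1 : 1 ≤ q := le_trans (by norm_num) hq
  -- Step A: for any prime `l ∤ q` and `k ≥ 1`, `a d = 0` where `d` is the order of `q`
  -- in `ZMod (l^k)`.
  have keyA : ∀ l : ℕ, l.Prime → ¬ l ∣ q → ∀ k : ℕ, 0 < k →
      a (orderOf ((q : ℕ) : ZMod (l ^ k))) = 0 := by
    intro l hl hlq k hk
    have hN : l ^ k ≠ 0 := pow_ne_zero k hl.pos.ne'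
    haveI : NeZero (l ^ k) := ⟨hN⟩
    have hcop : Nat.Coprime q (l ^ k) :=
      (((Nat.Prime.coprime_iff_not_dvd hl).mpr hlq).symm).pow_right k
    set u : (ZMod (l ^ k))ˣ := ZMod.unitOfCoprime q hcop with hu
    have hcoe : ((u : ZMod (l ^ k))) = ((q : ℕ) : ZMod (l ^ k)) := ZMod.coe_unitOfCoprime q hcop
    set d : ℕ := orderOf ((q : ℕ) : ZMod (l ^ k)) with hd
    have hdu : d = orderOf u := by rw [hd, ← hcoe, orderOf_units]
    have hdpos : 0 < d := by rw [hdu]; exact orderOf_pos u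
    set m : ℕ := (l ^ k).totient with hm
    have hmpos : 0 < m := Nat.totient_pos.mpr (Nat.pos_of_ne_zero hN)
    haveI : NeZero m := ⟨hmpos.ne'⟩
    have hdm : d ∣ m := by
      rw [hdu]
      exact orderOf_dvd_of_pow_eq_one (ZMod.pow_totient u)
    set b : ℕ := (a m).val with hb
    have hbm : (b : ZMod m) = a m := by rw [hb, ZMod.natCast_val, ZMod.cast_id]
    have hqb : q ^ b ≡ 1 [MOD l ^ k] := H l hl hlq k hk b hbm
    have hpow : ((q : ℕ) : ZMod (l ^ k)) ^ b = 1 := by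
      have := (ZMod.natCast_eq_natCast_iff _ _ _).mpr hqb
      push_cast at this
      simpa using this
    have hdb : d ∣ b := orderOf_dvd_of_pow_eq_one hpow
    have := ha d m hdpos hdm
    rw [← this, ← hbm]
    simp only [ZMod.castHom_apply, ZMod.cast_natCast hdm]
    exact (ZMod.natCast_eq_zero_iff b d).mpr hdb
  -- Step B: `a (p ^ e) = 0` for every prime power.
  have keyB : ∀ p : ℕ, p.Prime → ∀ e : ℕ, a (p ^ e) = 0 := by
    intro p hp e
    rcases Nat.eq_zero_or_pos e with he | he
    · subst he; simpa using (Subsingleton.elim _ _)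
    by_cases hpq : p ∣ q
    · -- cyclotomic case: find a prime `l ∤ q` with order of `q` mod `l` equal to `p ^ e`.
      obtain ⟨e', rfl⟩ : ∃ e', e = e' + 1 := ⟨e - 1, (Nat.succ_pred_eq_of_pos he).symm⟩
      set Q : ℕ := q ^ p ^ e' with hQ
      have hQ2 : 2 ≤ Q := le_trans hq (Nat.le_self_pow (pow_ne_zero _ hp.pos.ne') q)
      set c : ℕ := ∑ i ∈ Finset.range p, Q ^ i with hc
      have hc2 : 2 ≤ c := by
        have : 1 + Q ≤ c := by
          have h2p : 2 ≤ p := hp.two_le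
          calc 1 + Q = Q ^ 0 + Q ^ 1 := by ring
          _ ≤ ∑ i ∈ Finset.range 2, Q ^ i := by
              rw [Finset.sum_range_succ, Finset.sum_range_one]
          _ ≤ c := Finset.sum_le_sum_of_subset (by
              intro x hx
              simp only [Finset.mem_range] at *
              omega)
        omega
      set l : ℕ := c.minFac with hlf
      have hl : l.Prime := Nat.minFac_prime (by omega)
      have hlc : l ∣ c := Nat.minFac_dvd c
      -- `c ∣ q ^ (p ^ (e' + 1)) - 1` in ℤ
      have hcdvd : (c : ℤ) ∣ (q : ℤ) ^ p ^ (e' + 1) - 1 := by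
        have := geom_sum_mul (x := (Q : ℤ)) (n := p)
        refine ⟨(Q : ℤ) - 1, ?_⟩
        have hcz : (c : ℤ) = ∑ i ∈ Finset.range p, (Q : ℤ) ^ i := by push_cast [hc]; ring
        rw [hcz, this]
        push_cast [hQ]
        rw [← pow_mul, ← pow_succ]
      have hlq : ¬ l ∣ q := by
        intro hdvd
        have h1 : (l : ℤ) ∣ (q : ℤ) ^ p ^ (e' + 1) - 1 :=
          dvd_trans (Int.natCast_dvd_natCast.mpr hlc) hcdvd
        have h2 : (l : ℤ) ∣ (q : ℤ) ^ p ^ (e' + 1) :=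
          dvd_pow (Int.natCast_dvd_natCast.mpr hdvd) (pow_ne_zero _ hp.pos.ne')
        have h3 : (l : ℤ) ∣ 1 := by
          have := dvd_sub h2 h1
          simpa using this
        have := Int.le_of_dvd one_pos h3
        have := hl.two_le
        omega
      have hlp : l ≠ p := fun h => hlq (h ▸ hpq)
      have hlpe : ¬ l ∣ p ^ (e' + 1) := by
        intro hdvd
        exact hlp (hl.dvd_of_dvd_pow hdvd |> fun h => (Nat.prime_dvd_prime_iff_eq hl hp).mp h)
      haveI : NeZero ((p ^ (e' + 1) : ℕ) : ZMod l) :=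
        ⟨fun h => hlpe ((ZMod.natCast_eq_zero_iff _ _).mp h)⟩
      -- `q` is a root of the cyclotomic polynomial mod `l`
      have hroot : IsRoot (cyclotomic (p ^ (e' + 1)) (ZMod l)) ((q : ℕ) : ZMod l) := by
        have heval : (cyclotomic (p ^ (e' + 1)) ℤ).eval (q : ℤ) = (c : ℤ) := by
          rw [cyclotomic_prime_pow_eq_geom_sum hp]
          push_cast [hc, hQ]
          simp [eval_finset_sum, ← pow_mul, mul_comm]
        have : (cyclotomic (p ^ (e' + 1)) (ZMod l)).eval (((q : ℤ) : ZMod l)) =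
            (((cyclotomic (p ^ (e' + 1)) ℤ).eval (q : ℤ) : ℤ) : ZMod l) := by
          rw [← map_cyclotomic_int (p ^ (e' + 1)) (ZMod l)]
          exact Polynomial.eval_intCast_map (Int.castRingHom (ZMod l)) _ _
        rw [IsRoot.def]
        have hcast : (((q : ℕ) : ℤ) : ZMod l) = ((q : ℕ) : ZMod l) := by push_cast; ring
        rw [← hcast, this, heval]
        rw [show ((c : ℤ) : ZMod l) = ((c : ℕ) : ZMod l) by push_cast; ring]
        exact (ZMod.natCast_eq_zero_iff c l).mpr hlc
      haveI : Fact l.Prime := ⟨hl⟩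
      have hprim : IsPrimitiveRoot ((q : ℕ) : ZMod l) (p ^ (e' + 1)) :=
        (Polynomial.isRoot_cyclotomic_iff).mp hroot
      have hord : p ^ (e' + 1) = orderOf ((q : ℕ) : ZMod l) := hprim.eq_orderOf
      have := keyA l hl hlq 1 one_pos
      rw [pow_one] at this
      rw [hord]
      exact this
    · -- lifting case: `l = p`, large `k`.
      set k : ℕ := q * p ^ e with hk
      have hkpos : 0 < k := Nat.mul_pos (by omega) (pow_pos hp.pos e)
      set d : ℕ := orderOf ((q : ℕ) : ZMod (p ^ k)) with hd
      have hN : p ^ k ≠ 0 := pow_ne_zero k hp.pos.ne'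
      haveI : NeZero (p ^ k) := ⟨hN⟩
      have hcop : Nat.Coprime q (p ^ k) :=
        (((Nat.Prime.coprime_iff_not_dvd hp).mpr hpq).symm).pow_right k
      set u : (ZMod (p ^ k))ˣ := ZMod.unitOfCoprime q hcop with hu
      have hcoe : ((u : ZMod (p ^ k))) = ((q : ℕ) : ZMod (p ^ k)) := ZMod.coe_unitOfCoprime q hcop
      have hdu : d = orderOf u := by rw [hd, ← hcoe, orderOf_units]
      have hdpos : 0 < d := by rw [hdu]; exact orderOf_pos u
      have hdm : d ∣ (p ^ k).totient := by
        rw [hdu]; exact orderOf_dvd_of_pow_eq_one (ZMod.pow_totient u)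
      rw [Nat.totient_prime_pow hp hkpos] at hdm
      -- `p ^ k ∣ q ^ d - 1`, hence `p ^ k ≤ q ^ d - 1 < q ^ d`
      have hpow : ((q : ℕ) : ZMod (p ^ k)) ^ d = 1 := pow_orderOf_eq_one _
      have hmod : q ^ d ≡ 1 [MOD p ^ k] := by
        have : ((q ^ d : ℕ) : ZMod (p ^ k)) = ((1 : ℕ) : ZMod (p ^ k)) := by push_cast; simpa using hpow
        exact (ZMod.natCast_eq_natCast_iff _ _ _).mp this
      have hqd1 : 1 ≤ q ^ d := Nat.one_le_pow _ _ (by omega)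
      have hdvd : p ^ k ∣ q ^ d - 1 := (Nat.modEq_iff_dvd' hqd1).mp hmod.symm
      have hqd2 : 2 ≤ q ^ d := by
        calc 2 ≤ q := hq
        _ = q ^ 1 := (pow_one q).symm
        _ ≤ q ^ d := Nat.pow_le_pow_right (by omega) hdpos
      have hle : p ^ k ≤ q ^ d - 1 := Nat.le_of_dvd (by omega) hdvd
      have hlt : p ^ k < q ^ d := by omega
      -- then `p ^ e < d`
      have hped : p ^ e < d := by
        by_contra hcon
        push_neg at hcon
        have : q ^ d ≤ q ^ p ^ e := Nat.pow_le_pow_right (by omega) hcon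
        have h1 : q ^ p ^ e < (2 ^ q) ^ p ^ e :=
          Nat.pow_lt_pow_left (Nat.lt_two_pow_self (n := q)) (pow_ne_zero _ hp.pos.ne')
        have h2 : (2 ^ q) ^ p ^ e ≤ (p ^ q) ^ p ^ e :=
          Nat.pow_le_pow_left (Nat.pow_le_pow_left hp.two_le q) _
        have h3 : (p ^ q) ^ p ^ e = p ^ k := by rw [← pow_mul, hk]
        omega
      -- suppose `¬ p ^ e ∣ d`; derive a contradiction
      by_contra hane
      -- it suffices to show `p ^ e ∣ d`
      have hped' : p ^ e ∣ d := by
        by_contra hnd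
        have hdne : d ≠ 0 := hdpos.ne'
        set j : ℕ := d.factorization p with hj
        have hje : j < e := by
          by_contra hcon2
          push_neg at hcon2
          exact hnd (dvd_trans (pow_dvd_pow p hcon2) (Nat.ordProj_dvd d p))
        set cc : ℕ := d / p ^ j with hcc
        have hccd : p ^ j * cc = d := Nat.ordProj_mul_ordCompl_eq_self d p
        have hcop2 : Nat.Coprime cc p := (Nat.coprime_ordCompl hp hdne).symm
        have hccdvd : cc ∣ (p - 1) * p ^ (k - 1) := by
          have : cc ∣ p ^ (k - 1) * (p - 1) := dvd_trans (Dvd.intro_left _ hccd) hdm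
          rwa [mul_comm] at this
        have hccp1 : cc ∣ p - 1 := (Nat.Coprime.pow_right (k - 1) hcop2).dvd_of_dvd_mul_right hccdvd
        have hccpos : 0 < cc := by
          rcases Nat.eq_zero_or_pos cc with h | h
          · rw [h, mul_zero] at hccd; omega
          · exact h
        have hcclt : cc ≤ p - 1 := Nat.le_of_dvd (by have := hp.two_le; omega) hccp1
        have hjle : p ^ j ≤ p ^ (e - 1) := Nat.pow_le_pow_right hp.pos (by omega)
        have hdle : d ≤ p ^ (e - 1) * (p - 1) := by
          calc d = p ^ j * cc := hccd.symm
          _ ≤ p ^ (e - 1) * (p - 1) := Nat.mul_le_mul hjle hcclt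
        have hpe : p ^ (e - 1) * (p - 1) < p ^ e := by
          have : p ^ (e - 1) * (p - 1) < p ^ (e - 1) * p :=
            Nat.mul_lt_mul_of_le_of_lt (le_refl _) (by have := hp.two_le; omega)
              (pow_pos hp.pos _)
          calc p ^ (e - 1) * (p - 1) < p ^ (e - 1) * p := this
          _ = p ^ e := by rw [← pow_succ]; congr 1; omega
        omega
      -- conclude
      have := ha (p ^ e) d (pow_pos hp.pos e) hped'
      rw [keyA p hp hpq k hkpos] at this
      simp only [map_zero] at this
      exact hane this.symm
  -- Step C: conclude for all `n`.
  intro n hn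
  haveI : NeZero n := ⟨hn.ne'⟩
  set v : ℕ := (a n).val with hv
  have hvlt : v < n := ZMod.val_lt (a n)
  rcases Nat.eq_zero_or_pos v with hv0 | hv0
  · exact (ZMod.val_eq_zero (a n)).mp hv0
  exfalso
  have hdvd : n ∣ v := by
    rw [← Nat.factorization_le_iff_dvd hn.ne' hv0.ne', Finsupp.le_def]
    intro p
    by_cases hp : p.Prime
    · set e : ℕ := n.factorization p with he
      have hpen : p ^ e ∣ n := Nat.ordProj_dvd n p
      have h0 := ha (p ^ e) n (pow_pos hp.pos e) hpen
      rw [keyB p hp e] at h0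
      have hvz : ((v : ℕ) : ZMod (p ^ e)) = 0 := by
        rw [hv, ZMod.natCast_val, ← ZMod.castHom_apply (h := hpen), h0]
      have : p ^ e ∣ v := (ZMod.natCast_eq_zero_iff v (p ^ e)).mp hvz
      exact (Nat.Prime.pow_dvd_iff_le_factorization hp hv0.ne').mp this
    · simp [Nat.factorization_eq_zero_of_not_prime n hp]
  have := Nat.le_of_dvd hv0 hdvd
  omega
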